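/- Let f, n, m be natural numbers with n > 3f and m ≥ n − f. Let P be a multiset of real numbers with card P = n and let U be a sub-multiset of P with card U = m. Let x ∈ U and let b be a real number. If the destination D(x, P) = (min(x, P_(f+1)) + max(x, P_(n−f)))/2 satisfies D(x, P) < min U + b, then at least m − f elements of U (counted with multiplicity) are strictly smaller than min U + 2b; equivalently, the number of elements of U that are ≥ min U + 2b is at most f. -/

import Mathlib

/-- The k-th smallest element (1-indexed, counted with multiplicity) of a
multiset of real numbers. -/
noncomputable def nth (S : Multiset ℝ) (k : ℕ) : ℝ :=
  (S.sort (· ≤ ·)).getD (k - 1) 0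

/-- The smallest element of a (nonempty) multiset of reals. -/
noncomputable def mmin (S : Multiset ℝ) : ℝ := nth S 1

/-- The largest element of a (nonempty) multiset of reals. -/
noncomputable def mmax (S : Multiset ℝ) : ℝ := nth S S.card

/-- The diameter of a (nonempty) multiset of reals. -/
noncomputable def mdiam (S : Multiset ℝ) : ℝ := mmax S - mmin S

lemma sorted_getElem_le {L : List ℝ} (hL : L.Pairwise (· ≤ ·)) {i j : ℕ} (hi : i ≤ j)
    (hj : j < L.length) : L[i]'(lt_of_le_of_lt hi hj) ≤ L[j] := by
  rcases eq_or_lt_of_le hi with rfl | h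
  · rfl
  · exact List.pairwise_iff_get.1 hL ⟨i, _⟩ ⟨j, _⟩ h

lemma countP_lt_ge {L : List ℝ} (hL : L.Pairwise (· ≤ ·)) {k : ℕ} (hk : k < L.length) {c : ℝ}
    (h : L[k] < c) : k + 1 ≤ L.countP (fun y => decide (y < c)) := by
  have hsub := (L.take_sublist (k+1)).countP_le (p := fun y => decide (y < c))
  have hall : (L.take (k+1)).countP (fun y => decide (y < c)) = (L.take (k+1)).length := by
    apply List.countP_eq_length.2
    intro a ha
    rw [List.mem_take_iff_getElem] at ha
    obtain ⟨i, hi, rfl⟩ := ha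
    simp only [decide_eq_true_eq]
    exact lt_of_le_of_lt (sorted_getElem_le hL (by omega : i ≤ k) hk) h
  rw [hall, List.length_take] at hsub
  omega

lemma countP_ge_le {L : List ℝ} (hL : L.Pairwise (· ≤ ·)) {k : ℕ} (hk : k < L.length) {c : ℝ}
    (h : L[k] < c) : L.countP (fun y => decide (c ≤ y)) ≤ L.length - (k + 1) := by
  have hnot := L.length_eq_countP_add_countP (fun y => decide (y < c))
  have := countP_lt_ge hL hk h
  have heq := List.countP_congr (l := L)
    (p := fun a => decide ¬ (decide (a < c) = true)) (q := fun y => decide (c ≤ y))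
    (fun a _ => by simp [not_lt])
  omega

lemma mmin_le {U : Multiset ℝ} {y : ℝ} (hy : y ∈ U) : mmin U ≤ y := by
  have hs := U.pairwise_sort (· ≤ ·)
  rw [← Multiset.mem_sort (· ≤ ·)] at hy
  obtain ⟨i, hi, rfl⟩ := List.getElem_of_mem hy
  have h0 : 0 < (U.sort (· ≤ ·)).length := by omega
  have := sorted_getElem_le hs (Nat.zero_le i) hi
  simpa [mmin, nth, List.getD_eq_getElem?_getD, List.getElem?_eq_getElem h0] using this

theorem stmt10 (f n m : ℕ) (P U : Multiset ℝ) (x b : ℝ)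
    (hn : n > 3 * f) (hm : m ≥ n - f)
    (hP : Multiset.card P = n) (hU : U ≤ P) (hUm : Multiset.card U = m)
    (hx : x ∈ U)
    (hD : (min x (nth P (f + 1)) + max x (nth P (n - f))) / 2 < mmin U + b) :
    Multiset.card (U.filter (fun y => y < mmin U + 2 * b)) ≥ m - f ∧
    Multiset.card (U.filter (fun y => mmin U + 2 * b ≤ y)) ≤ f := by
  set u := mmin U with hu
  set L := P.sort (· ≤ ·) with hL
  have hsorted : L.Pairwise (· ≤ ·) := P.pairwise_sort _
  have hlen : L.length = n := by rw [hL, Multiset.length_sort, hP]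
  have hcoe : (↑L : Multiset ℝ) = P := P.sort_eq _
  have hxu : u ≤ x := mmin_le hx
  have hmn : m ≤ n := by
    rw [← hP, ← hUm]; exact Multiset.card_le_card hU
  -- card of elements of P below u is at most f
  have hcardlt : Multiset.card (P.filter (fun y => y < u)) ≤ f := by
    have h1 : U ≤ P.filter (fun y => ¬ y < u) :=
      Multiset.le_filter.2 ⟨hU, fun a ha => not_lt.2 (mmin_le ha)⟩
    have h2 := Multiset.card_le_card h1
    have h3 : Multiset.card (P.filter (fun y => y < u))
        + Multiset.card (P.filter (fun y => ¬ y < u)) = n := by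
      rw [← Multiset.card_add, Multiset.filter_add_not, hP]
    omega
  -- hence the (f+1)-th smallest of P is at least u
  have hf1 : f < L.length := by omega
  have hnthf : nth P (f + 1) = L[f] := by
    simp [nth, ← hL, List.getD_eq_getElem?_getD, List.getElem?_eq_getElem hf1]
  have hPf : u ≤ nth P (f + 1) := by
    by_contra hcon
    push_neg at hcon
    rw [hnthf] at hcon
    have := countP_lt_ge hsorted hf1 hcon
    have hc : Multiset.card (P.filter (fun y => y < u)) = L.countP (fun y => decide (y < u)) := by
      rw [← Multiset.countP_eq_card_filter, ← hcoe, Multiset.coe_countP]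
    omega
  -- the (n-f)-th smallest of P is below u + 2b
  have hmax : max x (nth P (n - f)) < u + 2 * b := by
    have := le_min hxu hPf
    have h1 := min_le_left x (nth P (f+1))
    linarith [hD]
  have hnf1 : n - f - 1 < L.length := by omega
  have hnth2 : nth P (n - f) = L[n - f - 1] := by
    simp [nth, ← hL, List.getD_eq_getElem?_getD, List.getElem?_eq_getElem hnf1]
  have hbig : L[n - f - 1] < u + 2 * b := by
    rw [← hnth2]; exact lt_of_le_of_lt (le_max_right _ _) hmax
  have hcount := countP_ge_le hsorted hnf1 hbig
  have hPcount : Multiset.card (P.filter (fun y => u + 2 * b ≤ y)) ≤ f := by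
    have hc : Multiset.card (P.filter (fun y => u + 2 * b ≤ y))
        = L.countP (fun y => decide (u + 2 * b ≤ y)) := by
      rw [← Multiset.countP_eq_card_filter, ← hcoe, Multiset.coe_countP]
    omega
  have hright : Multiset.card (U.filter (fun y => u + 2 * b ≤ y)) ≤ f :=
    le_trans (Multiset.card_le_card (Multiset.filter_le_filter _ hU)) hPcount
  refine ⟨?_, hright⟩
  have hsplit : Multiset.card (U.filter (fun y => y < u + 2 * b))
      + Multiset.card (U.filter (fun y => ¬ y < u + 2 * b)) = m := by
    rw [← Multiset.card_add, Multiset.filter_add_not, hUm]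
  have heq : U.filter (fun y => ¬ y < u + 2 * b) = U.filter (fun y => u + 2 * b ≤ y) := by
    apply Multiset.filter_congr; intro a _; simp [not_lt]
  rw [heq] at hsplit
  omega
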